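/- Let E₁,…,Eₙ be Banach lattices such that each Eⱼ is an AM-space with unit eⱼ, i.e. eⱼ ≥ 0 and for every x ∈ Eⱼ one has ‖x‖ ≤ 1 if and only if |x| ≤ eⱼ, and let F be a Dedekind complete Banach lattice. Then every positive continuous n-linear operator A : E₁ × ⋯ × Eₙ → F attains its norm; in fact ‖A(e₁,…,eₙ)‖ = ‖A‖. -/

import Mathlib

open Filter Topology

section Aux

variable {n : ℕ} {E : Fin n → Type*}
    [∀ i, NormedAddCommGroup (E i)] [∀ i, Lattice (E i)] [∀ i, IsOrderedAddMonoid (E i)]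
    [∀ i, HasSolidNorm (E i)] [∀ i, NormedSpace ℝ (E i)]
    {F : Type*} [NormedAddCommGroup F] [Lattice F] [IsOrderedAddMonoid F] [HasSolidNorm F]
    [NormedSpace ℝ F]

/-- Monotonicity of a positive multilinear map on nonnegative arguments. -/
lemma aux_mono (A : ContinuousMultilinearMap ℝ E F)
    (hA : ∀ x : ∀ i, E i, (∀ i, 0 ≤ x i) → 0 ≤ A x)
    (u v : ∀ i, E i) (hu : ∀ i, 0 ≤ u i) (huv : ∀ i, u i ≤ v i) : A u ≤ A v := by
  classical
  have hv : ∀ i, 0 ≤ v i := fun i => (hu i).trans (huv i)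
  have key : ∀ s : Finset (Fin n), A u ≤ A (fun i => if i ∈ s then v i else u i) := by
    intro s
    induction s using Finset.induction with
    | empty => simp
    | @insert j s hj ih =>
      set w : ∀ i, E i := fun i => if i ∈ s then v i else u i with hw
      have h1 : (fun i => if i ∈ insert j s then v i else u i) = Function.update w j (v j) := by
        funext i
        by_cases hij : i = j
        · subst hij; simp [Function.update_self, hw]
        · simp [Function.update_of_ne hij, hw, hij]
      have h2 : w = Function.update w j (u j) := by
        funext i
        by_cases hij : i = j
        · subst hij; simp [Function.update_self, hw, hj]
        · simp [Function.update_of_ne hij]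
      have hwpos : ∀ i, 0 ≤ Function.update w j (v j - u j) i := by
        intro i
        by_cases hij : i = j
        · subst hij
          simpa using sub_nonneg.mpr (huv i)
        · simp only [Function.update_of_ne hij, hw]
          split <;> [exact hv i; exact hu i]
      have hsub : (0:F) ≤ A (Function.update w j (v j)) - A (Function.update w j (u j)) := by
        rw [← A.map_update_sub w j (v j) (u j)]
        exact hA _ hwpos
      calc A u ≤ A w := ih
        _ = A (Function.update w j (u j)) := by rw [← h2]
        _ ≤ A (Function.update w j (v j)) := by
            have := sub_nonneg.mp hsub
            exact this
        _ = A (fun i => if i ∈ insert j s then v i else u i) := by rw [h1]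
  have := key Finset.univ
  simpa using this

/-- Triangle inequality for finite sums in a lattice ordered group. -/
lemma aux_sum_abs {ι : Type*} (s : Finset ι) (f : ι → F) :
    |∑ i ∈ s, f i| ≤ ∑ i ∈ s, |f i| := by
  classical
  induction s using Finset.induction with
  | empty => simp
  | @insert a s ha ih =>
    rw [Finset.sum_insert ha, Finset.sum_insert ha]
    exact (abs_add_le _ _).trans (add_le_add_right ih _)

set_option maxHeartbeats 1000000 in
/-- `|A x| ≤ A |x|` coordinatewise for a positive multilinear map. -/
lemma aux_abs (A : ContinuousMultilinearMap ℝ E F)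
    (hA : ∀ x : ∀ i, E i, (∀ i, 0 ≤ x i) → 0 ≤ A x)
    (x : ∀ i, E i) : |A x| ≤ A (fun i => |x i|) := by
  classical
  set g : ∀ i, Bool → E i := fun i b => if b then (x i)⁺ else (x i)⁻ with hg
  set c : Bool → ℝ := fun b => if b then 1 else -1 with hc
  have hx : ∀ i, x i = ∑ b : Bool, c b • g i b := by
    intro i
    simp only [hg, hc, Fintype.sum_bool, if_true, if_neg Bool.false_ne_true, one_smul,
      neg_one_smul, Bool.cond_true]
    rw [← sub_eq_add_neg, posPart_sub_negPart]
  have habs : ∀ i, |x i| = ∑ b : Bool, g i b := by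
    intro i
    simp [hg, Fintype.sum_bool, posPart_add_negPart]
  have hgpos : ∀ (r : Fin n → Bool) (i : Fin n), (0:E i) ≤ g i (r i) := by
    intro r i
    simp only [hg]
    split <;> [exact posPart_nonneg _; exact negPart_nonneg _]
  have hAx : A x = ∑ r : Fin n → Bool, (∏ i, c (r i)) • A (fun i => g i (r i)) := by
    have h1 : A x = A (fun i => ∑ b : Bool, c b • g i b) := by
      congr 1; funext i; exact hx i
    rw [h1]
    have h2 := A.toMultilinearMap.map_sum (fun i b => c b • g i b)
    simp only [ContinuousMultilinearMap.coe_coe] at h2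
    rw [h2]
    refine Finset.sum_congr rfl fun r _ => ?_
    exact A.toMultilinearMap.map_smul_univ (fun i => c (r i)) (fun i => g i (r i))
  have hAabs : A (fun i => |x i|) = ∑ r : Fin n → Bool, A (fun i => g i (r i)) := by
    have h1 : A (fun i => |x i|) = A (fun i => ∑ b : Bool, g i b) := by
      congr 1; funext i; exact habs i
    rw [h1]
    have h2 := A.toMultilinearMap.map_sum g
    simp only [ContinuousMultilinearMap.coe_coe] at h2
    rw [h2]
  rw [hAx, hAabs]
  calc |∑ r : Fin n → Bool, (∏ i, c (r i)) • A (fun i => g i (r i))|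
      ≤ ∑ r : Fin n → Bool, |(∏ i, c (r i)) • A (fun i => g i (r i))| :=
        aux_sum_abs _ _
    _ = ∑ r : Fin n → Bool, A (fun i => g i (r i)) := by
        refine Finset.sum_congr rfl fun r _ => ?_
        have hsign : (∏ i, c (r i)) = 1 ∨ (∏ i, c (r i)) = -1 := by
          refine Finset.prod_induction _ (fun t => t = 1 ∨ t = -1) ?_ (Or.inl rfl) ?_
          · rintro a b (ha | ha) (hb | hb) <;> simp [ha, hb]
          · intro i _
            simp only [hc]
            split <;> simp
        have hpos : 0 ≤ A (fun i => g i (r i)) := hA _ (hgpos r)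
        rcases hsign with h | h
        · rw [h, one_smul, abs_of_nonneg hpos]
        · rw [h, neg_one_smul, abs_neg, abs_of_nonneg hpos]

end Aux

/-- Example 3.11(3): if each `Eᵢ` is an AM-space with unit `eᵢ` and `F` is a Dedekind complete
Banach lattice, then every positive continuous `n`-linear operator `A : E₁ × ⋯ × Eₙ → F`
attains its norm; in fact `‖A(e₁,…,eₙ)‖ = ‖A‖`. -/
theorem stmt13 {n : ℕ} {E : Fin n → Type*}
    [∀ i, NormedAddCommGroup (E i)] [∀ i, Lattice (E i)] [∀ i, IsOrderedAddMonoid (E i)]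
    [∀ i, HasSolidNorm (E i)] [∀ i, NormedSpace ℝ (E i)]
    [∀ i, PosSMulStrictMono ℝ (E i)] [∀ i, PosSMulReflectLT ℝ (E i)] [∀ i, CompleteSpace (E i)]
    {F : Type*} [NormedAddCommGroup F] [Lattice F] [IsOrderedAddMonoid F] [HasSolidNorm F]
    [NormedSpace ℝ F] [PosSMulStrictMono ℝ F] [PosSMulReflectLT ℝ F]
    [CompleteSpace F]
    -- each `Eᵢ` is an AM-space with unit `eᵢ`
    (e : ∀ i, E i) (he : ∀ i, 0 ≤ e i)
    (ham : ∀ i, ∀ x : E i, ‖x‖ ≤ 1 ↔ |x| ≤ e i)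
    -- `F` is Dedekind complete
    (hDed : ∀ S : Set F, S.Nonempty → BddAbove S → ∃ s, IsLUB S s)
    -- `A` positive
    (A : ContinuousMultilinearMap ℝ E F)
    (hA : ∀ x : ∀ i, E i, (∀ i, 0 ≤ x i) → 0 ≤ A x) :
    (∃ x : ∀ i, E i, (∀ i, ‖x i‖ ≤ 1) ∧ ‖A x‖ = ‖A‖) ∧ ‖A e‖ = ‖A‖ := by
  have he1 : ∀ i, ‖e i‖ ≤ 1 := fun i => (ham i (e i)).mpr (by rw [abs_of_nonneg (he i)])
  -- on the unit ball, ‖A x‖ ≤ ‖A e‖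
  have hball : ∀ x : ∀ i, E i, (∀ i, ‖x i‖ ≤ 1) → ‖A x‖ ≤ ‖A e‖ := by
    intro x hx
    have h1 : |A x| ≤ A (fun i => |x i|) := aux_abs A hA x
    have h2 : A (fun i => |x i|) ≤ A e :=
      aux_mono A hA _ e (fun i => abs_nonneg _) (fun i => (ham i (x i)).mp (hx i))
    have h3 : |A x| ≤ |A e| := by
      rw [abs_of_nonneg (hA e he)]
      exact h1.trans h2
    exact norm_le_norm_of_abs_le_abs h3
  have hle : ‖A e‖ ≤ ‖A‖ := by
    calc ‖A e‖ ≤ ‖A‖ * ∏ i, ‖e i‖ := A.le_opNorm e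
      _ ≤ ‖A‖ * 1 := by
          exact mul_le_mul_of_nonneg_left
            (Finset.prod_le_one (fun i _ => norm_nonneg _) (fun i _ => he1 i)) A.opNorm_nonneg
      _ = ‖A‖ := mul_one _
  have hge : ‖A‖ ≤ ‖A e‖ := by
    refine A.opNorm_le_bound (norm_nonneg _) (fun m => ?_)
    by_cases h0 : ∃ i, m i = 0
    · obtain ⟨i, hi⟩ := h0
      rw [A.map_coord_zero i hi]
      simp only [norm_zero]
      exact mul_nonneg (norm_nonneg _) (Finset.prod_nonneg fun i _ => norm_nonneg _)
    · push_neg at h0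
      set u : ∀ i, E i := fun i => ‖m i‖⁻¹ • m i with hu
      have hu1 : ∀ i, ‖u i‖ ≤ 1 := fun i => le_of_eq (norm_smul_inv_norm (h0 i))
      have hm : m = fun i => ‖m i‖ • u i := by
        funext i
        rw [hu]
        rw [smul_smul, mul_inv_cancel₀ (norm_ne_zero_iff.mpr (h0 i)), one_smul]
      have hAm : A m = (∏ i, ‖m i‖) • A u := by
        conv_lhs => rw [hm]
        exact A.toMultilinearMap.map_smul_univ (fun i => ‖m i‖) u
      rw [hAm, norm_smul, Real.norm_eq_abs,
        abs_of_nonneg (Finset.prod_nonneg fun i _ => norm_nonneg _), mul_comm]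
      exact mul_le_mul (hball u hu1) le_rfl
        (Finset.prod_nonneg fun i _ => norm_nonneg _) (norm_nonneg _)
  have heq : ‖A e‖ = ‖A‖ := le_antisymm hle hge
  exact ⟨⟨e, he1, heq⟩, heq⟩
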